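/- Let ℓ ≥ r ≥ 3 be integers and let s satisfy ℓ − 1 ≤ s ≤ C(ℓ,2) − 1. Then for all sufficiently large n, there exists an n-vertex r-uniform hypergraph that is H_{ℓ+1}^r-free, has matching number at most s, and has s · t_{r−1}(n−s, ℓ−1) + 1 edges; in particular, ex_r(n, {H_{ℓ+1}^r, M_{s+1}^r}) ≥ s · t_{r−1}(n−s, ℓ−1) + 1. -/
import Mathlib


open Finset

variable {V : Type*}

/-- `H` is an `r`-uniform hypergraph: every edge is an `r`-element set. -/
def IsUniform (r : ℕ) (H : Finset (Finset V)) : Prop := ∀ e ∈ H, e.card = r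

/-- The matching number of `H` is at most `s`: every set of pairwise disjoint edges of `H`
has at most `s` elements. -/
def MatchingLE (H : Finset (Finset V)) (s : ℕ) : Prop :=
  ∀ M ⊆ H, ((M : Set (Finset V)).Pairwise fun a b => Disjoint a b) → M.card ≤ s

/-- `t_r(n,ℓ)`: the number of edges of the generalized Turán hypergraph `T_r(n,ℓ)`, realized
on `Fin n` with the balanced partition into `ℓ` parts given by residues modulo `ℓ` (each part
has size `⌊n/ℓ⌋` or `⌈n/ℓ⌉`); the edges are the `r`-sets meeting each part at most once. -/
def turanCount (r n ℓ : ℕ) : ℕ :=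
  ((Finset.univ : Finset (Finset (Fin n))).filter fun e => e.card = r ∧
    ∀ x ∈ e, ∀ y ∈ e, x.val % ℓ = y.val % ℓ → x = y).card

/-- `G` contains a copy of `H_m^r` (the expansion of `K_m`, with core of size `m`): a core `K`
of `m` vertices together with, for each pair `p ⊆ K`, an edge `f p ∈ G` meeting `K` exactly in
`p`, such that edges assigned to distinct pairs meet exactly in the intersection of the pairs
(so the `r-2` enlargement vertices are new and pairwise distinct for distinct pairs). -/
def ContainsHext [DecidableEq V] (m : ℕ) (G : Finset (Finset V)) : Prop :=
  ∃ K : Finset V, K.card = m ∧ ∃ f : Finset V → Finset V,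
    (∀ p ∈ K.powersetCard 2, f p ∈ G ∧ f p ∩ K = p) ∧
    ∀ p ∈ K.powersetCard 2, ∀ q ∈ K.powersetCard 2, p ≠ q → f p ∩ f q = p ∩ q

namespace Stmt18Aux

/-- The apex edge: apex vertex `i` (in the top `s` block) together with a low set `e`. -/
def gEdge (m s : ℕ) (i : Fin s) (e : Finset (Fin m)) : Finset (Fin (m + s)) :=
  insert (Fin.natAdd m i) (e.image (Fin.castAdd s))

lemma castAdd_inj {m s : ℕ} : Function.Injective (Fin.castAdd s : Fin m → Fin (m + s)) := by
  intro a b hab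
  have := congrArg Fin.val hab
  simp only [Fin.coe_castAdd] at this
  exact Fin.ext this

lemma natAdd_inj {m s : ℕ} : Function.Injective (Fin.natAdd m : Fin s → Fin (m + s)) := by
  intro a b hab
  have := congrArg Fin.val hab
  simp only [Fin.coe_natAdd] at this
  exact Fin.ext (by omega)

lemma filter_big (m s : ℕ) (i : Fin s) (e : Finset (Fin m)) :
    (gEdge m s i e).filter (fun x => m ≤ x.val) = {Fin.natAdd m i} := by
  ext x
  simp only [gEdge, mem_filter, mem_insert, mem_image, mem_singleton]
  constructor
  · rintro ⟨h1 | ⟨y, hy, rfl⟩, h2⟩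
    · exact h1
    · have := y.isLt
      simp only [Fin.coe_castAdd] at h2
      omega
  · rintro rfl
    exact ⟨Or.inl rfl, by simp⟩

lemma filter_low (m s : ℕ) (i : Fin s) (e : Finset (Fin m)) :
    (gEdge m s i e).filter (fun x => x.val < m) = e.image (Fin.castAdd s) := by
  ext x
  simp only [gEdge, mem_filter, mem_insert, mem_image]
  constructor
  · rintro ⟨h1 | h1, h2⟩
    · rw [h1] at h2
      simp only [Fin.coe_natAdd] at h2
      omega
    · exact h1
  · rintro ⟨y, hy, rfl⟩
    exact ⟨Or.inr ⟨y, hy, rfl⟩, by simp⟩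

lemma card_gEdge (m s : ℕ) (i : Fin s) (e : Finset (Fin m)) :
    (gEdge m s i e).card = e.card + 1 := by
  rw [gEdge, card_insert_of_notMem, card_image_of_injective _ castAdd_inj]
  simp only [mem_image]
  rintro ⟨y, hy, hxy⟩
  have h1 := congrArg Fin.val hxy
  have h2 := y.isLt
  simp only [Fin.coe_castAdd, Fin.coe_natAdd] at h1
  omega

lemma gEdge_inj {m s : ℕ} {i i' : Fin s} {e e' : Finset (Fin m)}
    (h : gEdge m s i e = gEdge m s i' e') : i = i' ∧ e = e' := by
  have h1 : ({Fin.natAdd m i} : Finset (Fin (m + s))) = {Fin.natAdd m i'} := by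
    rw [← filter_big m s i e, ← filter_big m s i' e', h]
  have hi : i = i' := natAdd_inj (Finset.singleton_injective h1)
  have h2 : e.image (Fin.castAdd s) = e'.image (Fin.castAdd s) := by
    rw [← filter_low m s i e, ← filter_low m s i' e', h]
  exact ⟨hi, Finset.image_injective castAdd_inj h2⟩

end Stmt18Aux

open Stmt18Aux in
theorem statement18 (r ℓ s : ℕ) (hr : 3 ≤ r) (hℓ : r ≤ ℓ)
    (hs₁ : ℓ - 1 ≤ s) (hs₂ : s ≤ ℓ.choose 2 - 1) :
    ∃ n₀ : ℕ, ∀ n ≥ n₀, ∃ H : Finset (Finset (Fin n)),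
      IsUniform r H ∧ ¬ ContainsHext (ℓ + 1) H ∧ MatchingLE H s ∧
      H.card = s * turanCount (r - 1) (n - s) (ℓ - 1) + 1 := by
  refine ⟨s + r * ℓ + 5, fun n hn => ?_⟩
  obtain ⟨m, rfl⟩ : ∃ m, n = m + s := ⟨n - s, by omega⟩
  have hmul : (r - 2) * (ℓ - 1) ≤ r * ℓ := Nat.mul_le_mul (by omega) (by omega)
  have hm : r * ℓ + 5 ≤ m := by omega
  have hs0 : 0 < s := by omega
  have hlle : ℓ ≤ r * ℓ := Nat.le_mul_of_pos_left ℓ (by omega)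
  -- the Turán (r-1)-graph on the low m vertices
  set T : Finset (Finset (Fin m)) := Finset.univ.filter (fun e => e.card = r - 1 ∧
    ∀ x ∈ e, ∀ y ∈ e, x.val % (ℓ - 1) = y.val % (ℓ - 1) → x = y) with hTdef
  -- the extra low set: r-1 vertices all ≡ 0 mod (ℓ-1)
  have hblt : ∀ a ∈ (Finset.range (r - 1)).image (fun j => j * (ℓ - 1)), a < m := by
    intro a ha
    simp only [mem_image, mem_range] at ha
    obtain ⟨j, hj, rfl⟩ := ha
    have : j * (ℓ - 1) ≤ (r - 2) * (ℓ - 1) := Nat.mul_le_mul_right _ (by omega)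
    omega
  set Blow : Finset (Fin m) := Finset.attachFin _ hblt with hBdef
  have hBcard : Blow.card = r - 1 := by
    rw [hBdef, Finset.card_attachFin, Finset.card_image_of_injective _
      (fun a b hab => Nat.eq_of_mul_eq_mul_right (by omega) hab), Finset.card_range]
  have hBnotT : Blow ∉ T := by
    intro hBT
    rw [hTdef, mem_filter] at hBT
    obtain ⟨-, -, h2⟩ := hBT
    have h0 : (⟨0, by omega⟩ : Fin m) ∈ Blow := by
      rw [hBdef, Finset.mem_attachFin]
      simp only [mem_image, mem_range]
      exact ⟨0, by omega, by omega⟩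
    have h1 : (⟨ℓ - 1, by omega⟩ : Fin m) ∈ Blow := by
      rw [hBdef, Finset.mem_attachFin]
      simp only [mem_image, mem_range]
      exact ⟨1, by omega, by omega⟩
    have heq := h2 _ h0 _ h1 (by simp [Nat.mod_self])
    have := congrArg Fin.val heq
    simp only at this
    omega
  set i0 : Fin s := ⟨0, hs0⟩ with hi0
  set H : Finset (Finset (Fin (m + s))) :=
    ((Finset.univ ×ˢ T).image fun p => gEdge m s p.1 p.2) ∪ {gEdge m s i0 Blow} with hHdef
  have hmem : ∀ A ∈ H, ∃ i e, e.card = r - 1 ∧ A = gEdge m s i e := by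
    intro A hA
    rw [hHdef, mem_union, mem_image, mem_singleton] at hA
    rcases hA with ⟨⟨i, e⟩, hp, rfl⟩ | rfl
    · rw [mem_product] at hp
      exact ⟨i, e, ((mem_filter.mp hp.2).2).1, rfl⟩
    · exact ⟨i0, Blow, hBcard, rfl⟩
  have hbig : ∀ A ∈ H, ∃ i : Fin s,
      A.filter (fun x => m ≤ x.val) = {Fin.natAdd m i} := by
    intro A hA
    obtain ⟨i, e, -, rfl⟩ := hmem A hA
    exact ⟨i, filter_big m s i e⟩
  -- the set of apex vertices
  set big : Finset (Fin (m + s)) := Finset.univ.filter (fun x => m ≤ x.val) with hbigdef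
  have hbigcard : big.card = s := by
    have : big = Finset.map ⟨Fin.natAdd m, natAdd_inj⟩ Finset.univ := by
      ext x
      simp only [hbigdef, mem_filter, mem_univ, true_and, Finset.mem_map,
        Function.Embedding.coeFn_mk]
      constructor
      · intro hx
        have hlt := x.isLt
        refine ⟨⟨x.val - m, by omega⟩, Fin.ext ?_⟩
        simp only [Fin.coe_natAdd]
        omega
      · rintro ⟨i, rfl⟩
        simp
    rw [this, Finset.card_map, Finset.card_univ, Fintype.card_fin]
  refine ⟨H, ?_, ?_, ?_, ?_⟩
  · -- uniform
    intro A hA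
    obtain ⟨i, e, hc, rfl⟩ := hmem A hA
    rw [card_gEdge, hc]
    omega
  · -- H-free
    rintro ⟨K, hK, f, hf1, hf2⟩
    set KS : Finset (Fin (m + s)) := K.filter (fun x => m ≤ x.val) with hKSdef
    set KL : Finset (Fin (m + s)) := K.filter (fun x => ¬ m ≤ x.val) with hKLdef
    have hsplit : KS.card + KL.card = ℓ + 1 := by
      rw [hKSdef, hKLdef, Finset.card_filter_add_card_filter_not, hK]
    have hKS1 : KS.card ≤ 1 := by
      by_contra hc
      have hc2 : 1 < KS.card := by omega
      obtain ⟨a, ha, b, hb, hab⟩ := Finset.one_lt_card.mp hc2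
      have haK : a ∈ K := Finset.mem_of_mem_filter a ha
      have hbK : b ∈ K := Finset.mem_of_mem_filter b hb
      have hp : ({a, b} : Finset (Fin (m + s))) ∈ K.powersetCard 2 :=
        Finset.mem_powersetCard.mpr ⟨by intro x hx; simp at hx; rcases hx with rfl | rfl <;>
          assumption, Finset.card_pair hab⟩
      obtain ⟨hfH, hfK⟩ := hf1 _ hp
      obtain ⟨i, hi⟩ := hbig _ hfH
      have haf : a ∈ f {a, b} := by
        have : a ∈ f {a, b} ∩ K := by rw [hfK]; simp
        exact (Finset.mem_inter.mp this).1
      have hbf : b ∈ f {a, b} := by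
        have : b ∈ f {a, b} ∩ K := by rw [hfK]; simp
        exact (Finset.mem_inter.mp this).1
      have ha' : a ∈ ({Fin.natAdd m i} : Finset (Fin (m + s))) := by
        rw [← hi, mem_filter]
        exact ⟨haf, (Finset.mem_filter.mp ha).2⟩
      have hb' : b ∈ ({Fin.natAdd m i} : Finset (Fin (m + s))) := by
        rw [← hi, mem_filter]
        exact ⟨hbf, (Finset.mem_filter.mp hb).2⟩
      rw [Finset.mem_singleton] at ha' hb'
      exact hab (ha'.trans hb'.symm)
    -- choose the apex vertex of each pair-edge
    have key : ∀ p : Finset (Fin (m + s)), ∃ b : Fin (m + s),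
        p ∈ KL.powersetCard 2 → b ∈ f p ∧ m ≤ b.val ∧ b ∉ K := by
      intro p
      by_cases hp : p ∈ KL.powersetCard 2
      · obtain ⟨hpsub, hpcard⟩ := Finset.mem_powersetCard.mp hp
        have hpK : p ∈ K.powersetCard 2 :=
          Finset.mem_powersetCard.mpr ⟨hpsub.trans (Finset.filter_subset _ _), hpcard⟩
        obtain ⟨hfH, hfK⟩ := hf1 _ hpK
        obtain ⟨i, hi⟩ := hbig _ hfH
        have hbmem : Fin.natAdd m i ∈ (f p).filter (fun x => m ≤ x.val) := by
          rw [hi]; simp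
        rw [mem_filter] at hbmem
        refine ⟨Fin.natAdd m i, fun _ => ⟨hbmem.1, hbmem.2, fun hbK => ?_⟩⟩
        have : Fin.natAdd m i ∈ p := by
          rw [← hfK]; exact Finset.mem_inter.mpr ⟨hbmem.1, hbK⟩
        have := (Finset.mem_filter.mp (hpsub this)).2
        exact this hbmem.2
      · exact ⟨⟨0, by omega⟩, fun h => absurd h hp⟩
    choose φ hφ using key
    have hcard_le : (KL.powersetCard 2).card ≤ (big \ K).card := by
      apply Finset.card_le_card_of_injOn φ
      · intro p hp
        obtain ⟨h1, h2, h3⟩ := hφ p hp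
        exact Finset.mem_sdiff.mpr ⟨Finset.mem_filter.mpr ⟨Finset.mem_univ _, h2⟩, h3⟩
      · intro p hp q hq hpq
        by_contra hne
        obtain ⟨hp1, hp2, hp3⟩ := hφ p hp
        obtain ⟨hq1, hq2, hq3⟩ := hφ q hq
        have hpK : p ∈ K.powersetCard 2 := by
          obtain ⟨h1, h2⟩ := Finset.mem_powersetCard.mp hp
          exact Finset.mem_powersetCard.mpr ⟨h1.trans (Finset.filter_subset _ _), h2⟩
        have hqK : q ∈ K.powersetCard 2 := by
          obtain ⟨h1, h2⟩ := Finset.mem_powersetCard.mp hq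
          exact Finset.mem_powersetCard.mpr ⟨h1.trans (Finset.filter_subset _ _), h2⟩
        have : φ p ∈ f p ∩ f q := Finset.mem_inter.mpr ⟨hp1, hpq ▸ hq1⟩
        rw [hf2 p hpK q hqK hne] at this
        have hpsub := (Finset.mem_powersetCard.mp hpK).1
        exact hp3 (hpsub (Finset.mem_inter.mp this).1)
    have hsd : (big \ K).card = s - KS.card := by
      have hsub : KS ⊆ big := by
        intro x hx
        exact Finset.mem_filter.mpr ⟨Finset.mem_univ _, (Finset.mem_filter.mp hx).2⟩
      have heq : big \ K = big \ KS := by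
        ext x
        simp only [Finset.mem_sdiff, hKSdef, Finset.mem_filter, hbigdef, mem_univ, true_and]
        constructor
        · rintro ⟨h1, h2⟩; exact ⟨h1, fun h => h2 h.1⟩
        · rintro ⟨h1, h2⟩; exact ⟨h1, fun h => h2 ⟨h, h1⟩⟩
      rw [heq, Finset.card_sdiff_of_subset hsub, hbigcard]
    rw [Finset.card_powersetCard, hsd] at hcard_le
    have hch1 : (ℓ + 1).choose 2 = ℓ.choose 1 + ℓ.choose 2 := Nat.choose_succ_succ ℓ 1
    have hch2 : ℓ.choose 1 = ℓ := Nat.choose_one_right ℓ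
    have hch3 : 3 ≤ ℓ.choose 2 := by
      calc 3 = Nat.choose 3 2 := by decide
      _ ≤ ℓ.choose 2 := Nat.choose_le_choose 2 (by omega)
    rcases Nat.le_one_iff_eq_zero_or_eq_one.mp hKS1 with h | h
    · have hKLl : KL.card = ℓ + 1 := by omega
      rw [hKLl, h] at hcard_le
      omega
    · have hKLl : KL.card = ℓ := by omega
      rw [hKLl, h] at hcard_le
      omega
  · -- matching number ≤ s
    intro M hM hpair
    have key2 : ∀ A : Finset (Fin (m + s)), ∃ b : Fin (m + s),
        A ∈ M → b ∈ A ∧ m ≤ b.val := by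
      intro A
      by_cases hA : A ∈ M
      · obtain ⟨i, hi⟩ := hbig A (hM hA)
        have : Fin.natAdd m i ∈ A.filter (fun x => m ≤ x.val) := by rw [hi]; simp
        rw [mem_filter] at this
        exact ⟨Fin.natAdd m i, fun _ => this⟩
      · exact ⟨⟨0, by omega⟩, fun h => absurd h hA⟩
    choose ψ hψ using key2
    calc M.card ≤ big.card := by
          apply Finset.card_le_card_of_injOn ψ
          · intro A hA
            exact Finset.mem_filter.mpr ⟨Finset.mem_univ _, (hψ A hA).2⟩
          · intro A hA B hB hAB
            by_contra hne
            have hdis := hpair hA hB hne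
            exact (Finset.disjoint_left.mp hdis (hψ A hA).1) (hAB ▸ (hψ B hB).1)
      _ = s := hbigcard
  · -- cardinality
    have hBnotim : gEdge m s i0 Blow ∉
        (Finset.univ ×ˢ T).image fun p => gEdge m s p.1 p.2 := by
      simp only [mem_image, mem_product, Prod.exists]
      rintro ⟨i, e, ⟨-, heT⟩, hge⟩
      obtain ⟨-, rfl⟩ := gEdge_inj hge
      exact hBnotT heT
    have hHcard : H.card = s * T.card + 1 := by
      rw [hHdef, Finset.card_union_of_disjoint (by simp [hBnotim]),
        Finset.card_singleton, Finset.card_image_of_injOn, Finset.card_product,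
        Finset.card_univ, Fintype.card_fin]
      intro p _ q _ hpq
      obtain ⟨h1, h2⟩ := gEdge_inj hpq
      exact Prod.ext h1 h2
    have hts : turanCount (r - 1) (m + s - s) (ℓ - 1) = T.card := by
      rw [Nat.add_sub_cancel, hTdef]
      rfl
    rw [hHcard, hts]
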